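/- arXiv:1312.7115 — 4 statements merged into one kernel-verified Lean document; each statement's English description precedes it below -/
import Mathlib

section
/- The integral of log Γ over the unit interval equals half the logarithm of 2π; that is, ∫_0^1 log Γ(x) dx = (1/2)·log(2π). -/
open Real

open MeasureTheory Set intervalIntegral


lemma intervalIntegrable_log_zero_one :
    IntervalIntegrable Real.log volume 0 1 := by
  have h : IntervalIntegrable (fun x : ℝ => 2 * x ^ (-(1/2) : ℝ)) volume 0 1 :=
    (intervalIntegral.intervalIntegrable_rpow' (by norm_num)).const_mul 2
  rw [intervalIntegrable_iff_integrableOn_Ioc_of_le zero_le_one] at h ⊢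
  apply h.mono' (Real.measurable_log.aestronglyMeasurable)
  filter_upwards [ae_restrict_mem measurableSet_Ioc] with x hx
  have hx0 : 0 < x := hx.1
  have hlogle : Real.log x ≤ 0 := Real.log_nonpos hx0.le hx.2
  rw [Real.norm_eq_abs, abs_of_nonpos hlogle]
  have hy : 0 < x ^ (-(1/2) : ℝ) := Real.rpow_pos_of_pos hx0 _
  have h1 : Real.log (x ^ (-(1/2) : ℝ)) ≤ x ^ (-(1/2) : ℝ) - 1 :=
    Real.log_le_sub_one_of_pos hy
  rw [Real.log_rpow hx0] at h1
  nlinarith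

lemma intervalIntegrable_log_zero {b : ℝ} (hb : 0 < b) :
    IntervalIntegrable Real.log volume 0 b := by
  rcases le_or_gt b 1 with h | h
  · exact intervalIntegrable_log_zero_one.mono_set
      (by rw [uIcc_of_le hb.le, uIcc_of_le zero_le_one]; exact Icc_subset_Icc le_rfl h)
  · exact intervalIntegrable_log_zero_one.trans
      (intervalIntegrable_log (by rw [uIcc_of_le h.le]; intro h0; exact absurd h0.1 (by norm_num)))

lemma intervalIntegrable_log_sin' :
    IntervalIntegrable (fun x => Real.log (Real.sin x)) volume 0 (π/2) := by
  have hpi : (0:ℝ) < π/2 := by positivity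
  have h : IntervalIntegrable (fun x : ℝ => ‖Real.log x‖ + Real.log π) volume 0 (π/2) :=
    ((intervalIntegrable_log_zero hpi).norm).add (intervalIntegrable_const)
  rw [intervalIntegrable_iff_integrableOn_Ioc_of_le hpi.le] at h ⊢
  apply h.mono' ((Real.measurable_log.comp Real.measurable_sin).aestronglyMeasurable)
  filter_upwards [ae_restrict_mem measurableSet_Ioc] with x hx
  have hx0 : 0 < x := hx.1
  have hs : 0 < Real.sin x := Real.sin_pos_of_pos_of_lt_pi hx0 (by linarith [hx.2, Real.pi_pos])
  have hb : 2 / π * x ≤ Real.sin x := Real.mul_le_sin hx0.le hx.2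
  have hsle : Real.sin x ≤ 1 := Real.sin_le_one x
  simp only [Function.comp_apply]
  rw [Real.norm_eq_abs, abs_of_nonpos (Real.log_nonpos hs.le hsle)]
  have h2 : Real.log (2 / π * x) ≤ Real.log (Real.sin x) :=
    Real.log_le_log (by positivity) hb
  have h3 : Real.log (2 / π * x) = Real.log (2/π) + Real.log x :=
    Real.log_mul (by positivity) hx0.ne'
  have h4 : Real.log (2/π) = Real.log 2 - Real.log π := Real.log_div (by norm_num) (by positivity)
  have h5 : Real.log x ≤ |Real.log x| := le_abs_self _
  have h6 : -Real.log x ≤ |Real.log x| := neg_le_abs _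
  have hlp : (0:ℝ) ≤ Real.log π := Real.log_nonneg (by linarith [Real.pi_gt_three])
  have h7 : (0:ℝ) ≤ Real.log 2 := Real.log_nonneg (by norm_num)
  simp only [Real.norm_eq_abs]
  linarith [abs_nonneg (Real.log x)]

lemma intervalIntegrable_log_cos' :
    IntervalIntegrable (fun x => Real.log (Real.cos x)) volume 0 (π/2) := by
  have h := (intervalIntegrable_log_sin'.comp_sub_left (π/2)).symm
  simp only [Real.sin_pi_div_two_sub, sub_zero, sub_self] at h
  exact h

lemma intervalIntegrable_log_sin_pi :
    IntervalIntegrable (fun x => Real.log (Real.sin x)) volume 0 π := by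
  refine intervalIntegrable_log_sin'.trans ?_
  have h := (intervalIntegrable_log_sin'.comp_sub_left π).symm
  simp only [Real.sin_pi_sub, sub_zero] at h
  have : π - π/2 = π/2 := by ring
  rwa [this] at h

lemma integral_log_cos_eq :
    ∫ x in (0:ℝ)..(π/2), Real.log (Real.cos x)
      = ∫ x in (0:ℝ)..(π/2), Real.log (Real.sin x) := by
  have h := intervalIntegral.integral_comp_sub_left
    (a := (0:ℝ)) (b := π/2) (fun x => Real.log (Real.sin x)) (π/2)
  simp only [Real.sin_pi_div_two_sub, sub_zero, sub_self] at h
  exact h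

lemma integral_log_sin_pi :
    ∫ x in (0:ℝ)..π, Real.log (Real.sin x)
      = 2 * ∫ x in (0:ℝ)..(π/2), Real.log (Real.sin x) := by
  have hsplit := intervalIntegral.integral_add_adjacent_intervals
    (a := (0:ℝ)) (b := π/2) (c := π) intervalIntegrable_log_sin'
    (by
      have h := (intervalIntegrable_log_sin'.comp_sub_left π).symm
      simp only [Real.sin_pi_sub, sub_zero] at h
      have : π - π/2 = π/2 := by ring
      rwa [this] at h)
  have h2 : ∫ x in (π/2:ℝ)..π, Real.log (Real.sin x)
      = ∫ x in (0:ℝ)..(π/2), Real.log (Real.sin x) := by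
    have h := intervalIntegral.integral_comp_sub_left
      (a := (0:ℝ)) (b := π/2) (fun x => Real.log (Real.sin x)) π
    simp only [Real.sin_pi_sub, sub_zero] at h
    have hpp : π - π/2 = π/2 := by ring
    rw [hpp] at h
    linarith [h]
  linarith [hsplit, h2]

lemma integral_log_sin_half : ∫ x in (0:ℝ)..(π/2), Real.log (Real.sin x)
    = -(π/2) * Real.log 2 := by
  set S := ∫ x in (0:ℝ)..(π/2), Real.log (Real.sin x) with hS
  have hdouble : ∫ x in (0:ℝ)..(π/2), Real.log (Real.sin (2*x)) = S := by
    have h := intervalIntegral.integral_comp_mul_left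
      (a := (0:ℝ)) (b := π/2) (fun x => Real.log (Real.sin x)) (c := 2) two_ne_zero
    simp only [mul_zero] at h
    have : (2:ℝ) * (π/2) = π := by ring
    rw [this] at h
    rw [h, integral_log_sin_pi, smul_eq_mul]
    ring
  have hsum : ∫ x in (0:ℝ)..(π/2), Real.log (Real.sin (2*x))
      = ∫ x in (0:ℝ)..(π/2), (Real.log 2 + Real.log (Real.sin x) + Real.log (Real.cos x)) := by
    apply intervalIntegral.integral_congr_ae
    have hae : ∀ᵐ x : ℝ, x ≠ π/2 := by
      refine ae_iff.mpr ?_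
      simp [not_not, Set.setOf_eq_eq_singleton]
    filter_upwards [hae] with x hxne hx
    rw [uIoc_of_le (by positivity : (0:ℝ) ≤ π/2)] at hx
    have hx0 : 0 < x := hx.1
    have hx2 : x < π/2 := lt_of_le_of_ne hx.2 hxne
    have hs : 0 < Real.sin x := Real.sin_pos_of_pos_of_lt_pi hx0 (by linarith [Real.pi_pos])
    have hc : 0 < Real.cos x := Real.cos_pos_of_mem_Ioo ⟨by linarith [Real.pi_pos], hx2⟩
    rw [Real.sin_two_mul, Real.log_mul (by positivity) hc.ne',
      Real.log_mul (by norm_num) hs.ne']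
  have hrhs : ∫ x in (0:ℝ)..(π/2), (Real.log 2 + Real.log (Real.sin x) + Real.log (Real.cos x))
      = (π/2) * Real.log 2 + S + S := by
    rw [intervalIntegral.integral_add (intervalIntegrable_const.add intervalIntegrable_log_sin')
        intervalIntegrable_log_cos',
      intervalIntegral.integral_add intervalIntegrable_const intervalIntegrable_log_sin',
      intervalIntegral.integral_const, integral_log_cos_eq]
    simp only [smul_eq_mul, sub_zero]
    rw [← hS]
  have := hdouble.symm.trans (hsum.trans hrhs)
  linarith

lemma intervalIntegrable_log_Gamma :
    IntervalIntegrable (fun x => Real.log (Real.Gamma x)) volume 0 1 := by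
  have hcont : ContinuousOn (fun x : ℝ => Real.log (Real.Gamma (x+1))) (uIcc 0 1) := by
    intro x hx
    rw [uIcc_of_le zero_le_one] at hx
    have h1 : (0:ℝ) < x + 1 := by linarith [hx.1]
    refine ContinuousAt.continuousWithinAt ?_
    have hg : ContinuousAt Real.Gamma ((fun y : ℝ => y + 1) x) :=
      (Real.differentiableAt_Gamma (fun m => by
        have hm : (-(m:ℝ)) ≤ 0 := neg_nonpos.mpr (Nat.cast_nonneg m)
        exact ne_of_gt (by simp only []; linarith))).continuousAt
    have hadd : ContinuousAt (fun y : ℝ => y + 1) x := by fun_prop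
    exact ContinuousAt.log (ContinuousAt.comp (f := fun y : ℝ => y + 1) hg hadd) (Real.Gamma_pos_of_pos h1).ne'
  have h1 : IntervalIntegrable (fun x => Real.log (Real.Gamma (x+1)) - Real.log x) volume 0 1 :=
    hcont.intervalIntegrable.sub intervalIntegrable_log_zero_one
  rw [intervalIntegrable_iff_integrableOn_Ioc_of_le zero_le_one] at h1 ⊢
  refine h1.congr_fun ?_ measurableSet_Ioc
  intro x hx
  have hx0 : 0 < x := hx.1
  simp only
  rw [Real.Gamma_add_one hx0.ne', Real.log_mul hx0.ne' (Real.Gamma_pos_of_pos hx0).ne']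
  ring

/-- The Raabe-type integral: `∫_0^1 log Γ(x) dx = (1/2)·log(2π)`. -/
theorem integral_logGamma_unit :
    ∫ x in (0:ℝ)..1, Real.log (Real.Gamma x) = (1 / 2) * Real.log (2 * π) := by
  have hpi := Real.pi_pos
  set I := ∫ x in (0:ℝ)..1, Real.log (Real.Gamma x) with hI
  have hGi := intervalIntegrable_log_Gamma
  have hGi' : IntervalIntegrable (fun x => Real.log (Real.Gamma (1 - x))) volume 0 1 := by
    have h := (hGi.comp_sub_left 1).symm
    simpa using h
  have hrefl : ∫ x in (0:ℝ)..1, Real.log (Real.Gamma (1 - x)) = I := by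
    have h := intervalIntegral.integral_comp_sub_left (a := (0:ℝ)) (b := 1)
      (fun x => Real.log (Real.Gamma x)) 1
    simpa using h
  have hsinInt : IntervalIntegrable (fun x => Real.log (Real.sin (π * x))) volume 0 1 := by
    have h := intervalIntegrable_log_sin_pi.comp_mul_left (c := π)
    simpa [div_self hpi.ne'] using h
  have hsum : I + I = ∫ x in (0:ℝ)..1,
      (Real.log (Real.Gamma x) + Real.log (Real.Gamma (1-x))) := by
    rw [intervalIntegral.integral_add hGi hGi', hrefl]
  have hcongr : ∫ x in (0:ℝ)..1, (Real.log (Real.Gamma x) + Real.log (Real.Gamma (1-x)))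
      = ∫ x in (0:ℝ)..1, (Real.log π - Real.log (Real.sin (π * x))) := by
    apply intervalIntegral.integral_congr_ae
    have hae : ∀ᵐ x : ℝ, x ≠ 1 := by
      refine ae_iff.mpr ?_
      simp [not_not, Set.setOf_eq_eq_singleton]
    filter_upwards [hae] with x hxne hx
    rw [uIoc_of_le zero_le_one] at hx
    have hx0 : 0 < x := hx.1
    have hx1 : x < 1 := lt_of_le_of_ne hx.2 hxne
    have h1x : 0 < 1 - x := by linarith
    have hs : 0 < Real.sin (π * x) :=
      Real.sin_pos_of_pos_of_lt_pi (by positivity) (by nlinarith)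
    have hrf := Real.Gamma_mul_Gamma_one_sub x
    rw [← Real.log_mul (Real.Gamma_pos_of_pos hx0).ne' (Real.Gamma_pos_of_pos h1x).ne', hrf,
      Real.log_div hpi.ne' hs.ne']
  have hlast : ∫ x in (0:ℝ)..1, (Real.log π - Real.log (Real.sin (π * x)))
      = Real.log π + Real.log 2 := by
    rw [intervalIntegral.integral_sub intervalIntegrable_const hsinInt,
      intervalIntegral.integral_const]
    have h := intervalIntegral.integral_comp_mul_left (a := (0:ℝ)) (b := 1)
      (fun x => Real.log (Real.sin x)) (c := π) hpi.ne'
    rw [mul_zero, mul_one] at h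
    rw [h, integral_log_sin_pi, integral_log_sin_half, smul_eq_mul]
    field_simp
    simp only [sub_zero, one_mul, smul_eq_mul, one_div, mul_neg, sub_neg_eq_add]
    rw [← mul_assoc, inv_mul_cancel₀ hpi.ne', one_mul]
  have h2I : I + I = Real.log (2 * π) := by
    rw [hsum, hcongr, hlast, Real.log_mul two_ne_zero hpi.ne', add_comm]
  linarith
end

section
/- For every positive integer n, the cosine Fourier coefficient of log Γ on (0,1) equals 1/(2n); that is, 2·∫_0^1 log Γ(x) · cos(2π n x) dx = 1/(2n). -/
open Real Finset Set Filter MeasureTheory intervalIntegral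


lemma sin_tpk (k : ℕ) : Real.sin (2*π*k) = 0 := by
  rw [show (2*π*(k:ℝ)) = (2*k : ℕ)*π by push_cast; ring, Real.sin_nat_mul_pi]

lemma cos_tpk (k : ℕ) : Real.cos (2*π*k) = 1 := by
  rw [show (2*π*(k:ℝ)) = (k:ℝ)*(2*π) by ring, Real.cos_nat_mul_two_pi]

noncomputable def Pp (n : ℕ) (x : ℝ) : ℝ :=
  (1/(2*(n:ℝ))) * (x + Real.sin (2*π*n*x)/(2*π*n)
    + ∑ k ∈ Finset.Ico 1 n, Real.sin (2*π*k*x)/(π*k))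

noncomputable def Gg (n : ℕ) (x : ℝ) : ℝ :=
  (Real.log π - Real.log (Real.sin (π*x))) * Real.sin (2*π*n*x) / (2*π*n) + Pp n x

lemma continuous_Pp (n : ℕ) : Continuous (Pp n) := by
  unfold Pp
  apply Continuous.mul continuous_const
  apply Continuous.add
  · apply Continuous.add continuous_id
    exact (Real.continuous_sin.comp (continuous_const.mul continuous_id)).div_const _
  · apply continuous_finset_sum
    intro k _
    exact (Real.continuous_sin.comp (continuous_const.mul continuous_id)).div_const _

lemma Pp_zero (n : ℕ) : Pp n 0 = 0 := by
  simp [Pp]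

lemma Pp_one (n : ℕ) : Pp n 1 = 1/(2*(n:ℝ)) := by
  simp only [Pp, mul_one, sin_tpk, zero_div, add_zero, Finset.sum_const_zero]

lemma tendsto_T_zero (n : ℕ) :
    Tendsto (fun x => (Real.log π - Real.log (Real.sin (π*x))) * Real.sin (2*π*n*x))
      (nhdsWithin 0 (Set.Ioi 0)) (nhds 0) := by
  have hπ := Real.pi_pos
  have hπ1 : (1:ℝ) < π := by nlinarith [Real.pi_gt_three]
  have hlogπ : 0 < Real.log π := Real.log_pos hπ1
  have hbound : ∀ᶠ x in nhdsWithin (0:ℝ) (Set.Ioi 0),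
      ‖(Real.log π - Real.log (Real.sin (π*x))) * Real.sin (2*π*n*x)‖
        ≤ 2*π*n*((Real.log π - Real.log 2)*x - Real.log x * x) := by
    filter_upwards [Ioo_mem_nhdsGT_of_mem (by norm_num : (0:ℝ) ∈ Set.Ico (0:ℝ) (1/2))]
    intro x hx
    have hx0 : 0 < x := hx.1
    have hxh : x ≤ 1/2 := hx.2.le
    have hs2 : 2*x ≤ Real.sin (π*x) := by
      have := Real.mul_le_sin (x := π*x) (by positivity) (by nlinarith)
      calc 2*x = 2/π*(π*x) := by field_simp
      _ ≤ _ := this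
    have hs1 : Real.sin (π*x) ≤ 1 := Real.sin_le_one _
    have hspos : 0 < Real.sin (π*x) := by linarith
    have hls : Real.log (2*x) ≤ Real.log (Real.sin (π*x)) := Real.log_le_log (by linarith) hs2
    have hls1 : Real.log (Real.sin (π*x)) ≤ 0 := Real.log_nonpos hspos.le hs1
    have habs : |Real.sin (2*π*n*x)| ≤ 2*π*n*x :=
      le_trans Real.abs_sin_le_abs (le_of_eq (abs_of_nonneg (by positivity)))
    have hf1 : 0 ≤ Real.log π - Real.log (Real.sin (π*x)) := by linarith
    rw [norm_eq_abs, abs_mul, abs_of_nonneg hf1]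
    have h1 : Real.log π - Real.log (Real.sin (π*x)) ≤ Real.log π - Real.log (2*x) := by
      linarith
    calc (Real.log π - Real.log (Real.sin (π*x))) * |Real.sin (2*π*n*x)|
        ≤ (Real.log π - Real.log (2*x)) * (2*π*n*x) :=
          mul_le_mul h1 habs (abs_nonneg _) (by linarith)
    _ = 2*π*n*((Real.log π - Real.log 2)*x - Real.log x * x) := by
          rw [Real.log_mul (by norm_num) hx0.ne']
          ring
  refine squeeze_zero_norm' hbound ?_
  have h1 : Tendsto (fun x:ℝ => Real.log x * x) (nhdsWithin 0 (Set.Ioi 0)) (nhds 0) :=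
    (tendsto_log_mul_rpow_nhdsGT_zero one_pos).congr (fun x => by rw [Real.rpow_one])
  have h0 : Tendsto (fun x:ℝ => x) (nhdsWithin 0 (Set.Ioi 0)) (nhds 0) :=
    Filter.tendsto_id.mono_left nhdsWithin_le_nhds
  have h2 := ((h0.const_mul (Real.log π - Real.log 2)).sub h1).const_mul (2*π*(n:ℝ))
  simpa using h2

lemma tendsto_Gg_zero (n : ℕ) :
    Tendsto (Gg n) (nhdsWithin 0 (Set.Ioi 0)) (nhds 0) := by
  have hT := (tendsto_T_zero n).div_const (2*π*(n:ℝ))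
  rw [zero_div] at hT
  have hP : Tendsto (Pp n) (nhdsWithin 0 (Set.Ioi 0)) (nhds 0) := by
    have := (continuous_Pp n).tendsto 0
    rw [Pp_zero] at this
    exact this.mono_left nhdsWithin_le_nhds
  have := hT.add hP
  rw [add_zero] at this
  exact this

lemma tendsto_Gg_one (n : ℕ) :
    Tendsto (Gg n) (nhdsWithin 1 (Set.Iio 1)) (nhds (1/(2*(n:ℝ)))) := by
  have hmap : Tendsto (fun x : ℝ => 1 - x) (nhdsWithin 1 (Set.Iio 1))
      (nhdsWithin 0 (Set.Ioi 0)) := by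
    rw [tendsto_nhdsWithin_iff]
    constructor
    · have : Tendsto (fun x : ℝ => 1 - x) (nhds 1) (nhds 0) := by
        have hc : Continuous (fun x : ℝ => 1 - x) := by continuity
        simpa using hc.tendsto (1:ℝ)
      exact this.mono_left nhdsWithin_le_nhds
    · filter_upwards [self_mem_nhdsWithin] with x hx
      simp only [Set.mem_Ioi, sub_pos]
      exact hx
  have hT := (tendsto_T_zero n).comp hmap
  have hTid : ∀ x : ℝ,
      -((Real.log π - Real.log (Real.sin (π*(1-x)))) * Real.sin (2*π*n*(1-x)))
        = (Real.log π - Real.log (Real.sin (π*x))) * Real.sin (2*π*n*x) := by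
    intro x
    have e1 : Real.sin (π*(1-x)) = Real.sin (π*x) := by
      rw [show π*(1-x) = π - π*x by ring, Real.sin_pi_sub]
    have e2 : Real.sin (2*π*n*(1-x)) = -Real.sin (2*π*n*x) := by
      rw [show 2*π*(n:ℝ)*(1-x) = 2*π*n - 2*π*n*x by ring, Real.sin_sub, sin_tpk, cos_tpk]
      ring
    rw [e1, e2]; ring
  have hT2 : Tendsto (fun x => (Real.log π - Real.log (Real.sin (π*x))) * Real.sin (2*π*n*x))
      (nhdsWithin 1 (Set.Iio 1)) (nhds 0) := by
    have := hT.neg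
    rw [neg_zero] at this
    exact this.congr hTid
  have hT3 := hT2.div_const (2*π*(n:ℝ))
  rw [zero_div] at hT3
  have hP : Tendsto (Pp n) (nhdsWithin 1 (Set.Iio 1)) (nhds (1/(2*(n:ℝ)))) := by
    have := (continuous_Pp n).tendsto 1
    rw [Pp_one] at this
    exact this.mono_left nhdsWithin_le_nhds
  have := hT3.add hP
  rw [zero_add] at this
  exact this

noncomputable def gg (n : ℕ) (x : ℝ) : ℝ :=
  (Real.log π - Real.log (Real.sin (π*x))) * Real.cos (2*π*n*x)

lemma integral_gg (n : ℕ) (hn : 1 ≤ n)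
    (hasD : ∀ x ∈ Set.Ioo (0:ℝ) 1, HasDerivAt (Gg n) (gg n x) x)
    (hint : IntervalIntegrable (gg n) volume 0 1) :
    ∫ x in (0:ℝ)..1, gg n x = 1/(2*(n:ℝ)) := by
  set P0 : ℝ → ℝ := fun u => ∫ x in (0:ℝ)..u, gg n x with hP0
  have hcont : ContinuousOn P0 (Set.Icc 0 1) := by
    have := intervalIntegral.continuousOn_primitive_interval' hint
      (Set.left_mem_uIcc (a := (0:ℝ)) (b := 1))
    simpa [Set.uIcc_of_le (zero_le_one (α := ℝ))] using this
  have hsub : ∀ a b : ℝ, a ∈ Set.Icc (0:ℝ) 1 → b ∈ Set.Icc (0:ℝ) 1 →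
      IntervalIntegrable (gg n) volume a b := by
    intro a b ha hb
    apply hint.mono_set
    rw [Set.uIcc_of_le (zero_le_one (α := ℝ))]
    exact Set.uIcc_subset_Icc ha hb
  have hftc : ∀ a b : ℝ, a ∈ Set.Ioo (0:ℝ) 1 → b ∈ Set.Ioo (0:ℝ) 1 → a ≤ b →
      ∫ x in a..b, gg n x = Gg n b - Gg n a := by
    intro a b ha hb hab
    apply intervalIntegral.integral_eq_sub_of_hasDerivAt
    · intro x hx
      rw [Set.uIcc_of_le hab] at hx
      exact hasD x ⟨lt_of_lt_of_le ha.1 hx.1, lt_of_le_of_lt hx.2 hb.2⟩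
    · exact hsub a b ⟨ha.1.le, ha.2.le⟩ ⟨hb.1.le, hb.2.le⟩
  have hsplit : ∀ a b : ℝ, a ∈ Set.Icc (0:ℝ) 1 → b ∈ Set.Icc (0:ℝ) 1 →
      P0 b - P0 a = ∫ x in a..b, gg n x := by
    intro a b ha hb
    exact intervalIntegral.integral_interval_sub_left
      (hsub 0 b (by norm_num) hb) (hsub 0 a (by norm_num) ha)
  have half : (1/2 : ℝ) ∈ Set.Ioo (0:ℝ) 1 := by norm_num
  have hP00 : P0 0 = 0 := intervalIntegral.integral_same
  -- left piece
  have hne1 : (nhdsWithin (0:ℝ) (Set.Ioo 0 (1/2))).NeBot := by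
    apply mem_closure_iff_nhdsWithin_neBot.mp
    rw [closure_Ioo (by norm_num : (0:ℝ) ≠ 1/2)]
    exact ⟨le_refl 0, by norm_num⟩
  have t1 : Tendsto (fun a => P0 (1/2) - P0 a) (nhdsWithin 0 (Set.Ioo 0 (1/2)))
      (nhds (P0 (1/2) - P0 0)) := by
    have hc0 : Tendsto P0 (nhdsWithin 0 (Set.Ioo 0 (1/2))) (nhds (P0 0)) :=
      (hcont.continuousWithinAt (by norm_num : (0:ℝ) ∈ Set.Icc (0:ℝ) 1)).mono_left
        (nhdsWithin_mono 0 (fun x hx => ⟨hx.1.le, by linarith [hx.2]⟩))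
    exact tendsto_const_nhds.sub hc0
  have t2 : Tendsto (fun a => Gg n (1/2) - Gg n a) (nhdsWithin 0 (Set.Ioo 0 (1/2)))
      (nhds (Gg n (1/2) - 0)) :=
    tendsto_const_nhds.sub ((tendsto_Gg_zero n).mono_left
      (nhdsWithin_mono 0 (fun x hx => hx.1)))
  have heq1 : ∀ᶠ a in nhdsWithin (0:ℝ) (Set.Ioo 0 (1/2)),
      P0 (1/2) - P0 a = Gg n (1/2) - Gg n a := by
    filter_upwards [self_mem_nhdsWithin] with a ha
    rw [hsplit a (1/2) ⟨ha.1.le, by linarith [ha.2]⟩ ⟨by norm_num, by norm_num⟩,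
        hftc a (1/2) ⟨ha.1, by linarith [ha.2]⟩ half ha.2.le]
  have e1 : P0 (1/2) - P0 0 = Gg n (1/2) - 0 :=
    tendsto_nhds_unique (t1.congr' heq1) t2
  -- right piece
  have hne2 : (nhdsWithin (1:ℝ) (Set.Ioo (1/2) 1)).NeBot := by
    apply mem_closure_iff_nhdsWithin_neBot.mp
    rw [closure_Ioo (by norm_num : (1/2:ℝ) ≠ 1)]
    exact ⟨by norm_num, le_refl 1⟩
  have t3 : Tendsto (fun b => P0 b - P0 (1/2)) (nhdsWithin 1 (Set.Ioo (1/2) 1))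
      (nhds (P0 1 - P0 (1/2))) := by
    have hc1 : Tendsto P0 (nhdsWithin 1 (Set.Ioo (1/2) 1)) (nhds (P0 1)) :=
      (hcont.continuousWithinAt (by norm_num : (1:ℝ) ∈ Set.Icc (0:ℝ) 1)).mono_left
        (nhdsWithin_mono 1 (fun x hx => ⟨by linarith [hx.1], hx.2.le⟩))
    exact hc1.sub tendsto_const_nhds
  have t4 : Tendsto (fun b => Gg n b - Gg n (1/2)) (nhdsWithin 1 (Set.Ioo (1/2) 1))
      (nhds (1/(2*(n:ℝ)) - Gg n (1/2))) :=
    ((tendsto_Gg_one n).mono_left (nhdsWithin_mono 1 (fun x hx => hx.2))).sub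
      tendsto_const_nhds
  have heq2 : ∀ᶠ b in nhdsWithin (1:ℝ) (Set.Ioo (1/2) 1),
      P0 b - P0 (1/2) = Gg n b - Gg n (1/2) := by
    filter_upwards [self_mem_nhdsWithin] with b hb
    rw [hsplit (1/2) b ⟨by norm_num, by norm_num⟩ ⟨by linarith [hb.1], hb.2.le⟩,
        hftc (1/2) b half ⟨by linarith [hb.1], hb.2⟩ (by linarith [hb.1])]
  have e2 : P0 1 - P0 (1/2) = 1/(2*(n:ℝ)) - Gg n (1/2) :=
    tendsto_nhds_unique (t3.congr' heq2) t4
  have : P0 1 = 1/(2*(n:ℝ)) := by linarith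
  exact this

lemma trig_id (θ : ℝ) : ∀ n : ℕ, 1 ≤ n →
    Real.sin θ * (1 + Real.cos (2*n*θ) + 2 * ∑ k ∈ Finset.Ico 1 n, Real.cos (2*k*θ))
      = Real.cos θ * Real.sin (2*n*θ) := by
  intro n hn
  induction n, hn using Nat.le_induction with
  | base =>
    simp only [Nat.cast_one, Finset.Ico_self, Finset.sum_empty, mul_zero, add_zero, one_mul]
    rw [show (2*(1:ℝ)*θ) = 2*θ by ring]
    rw [Real.sin_two_mul, Real.cos_two_mul]
    ring
  | succ n hn ih =>
    rw [Finset.sum_Ico_succ_top hn]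
    have e1 : (2*((n:ℝ)+1)*θ) = 2*(n:ℝ)*θ + 2*θ := by ring
    push_cast
    rw [e1, Real.cos_add, Real.sin_add, Real.sin_two_mul, Real.cos_two_mul]
    linear_combination ih - 2*Real.sin (2*(n:ℝ)*θ)*Real.cos θ * Real.sin_sq_add_cos_sq θ


lemma hasDerivAt_Gg (n : ℕ) (hn : 1 ≤ n) {x : ℝ} (hx : x ∈ Set.Ioo (0:ℝ) 1) :
    HasDerivAt (Gg n) (gg n x) x := by
  have hπ := Real.pi_pos
  have hn' : (0:ℝ) < n := by exact_mod_cast hn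
  have hs : 0 < Real.sin (π*x) :=
    Real.sin_pos_of_pos_of_lt_pi (mul_pos hπ hx.1)
      (by nlinarith [hx.2, hπ])
  have dlin : ∀ c : ℝ, HasDerivAt (fun y : ℝ => c*y) c x := by
    intro c; simpa using (hasDerivAt_id x).const_mul c
  have d1 : HasDerivAt (fun y => Real.sin (π*y)) (Real.cos (π*x)*π) x :=
    (Real.hasDerivAt_sin (π*x)).comp x (dlin π)
  have d2 : HasDerivAt (fun y => Real.log (Real.sin (π*y)))
      ((Real.cos (π*x)*π)/Real.sin (π*x)) x := d1.log hs.ne'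
  have d3 : ∀ c : ℝ, HasDerivAt (fun y => Real.sin (c*y)) (Real.cos (c*x)*c) x := by
    intro c; exact (Real.hasDerivAt_sin (c*x)).comp x (dlin c)
  have d4 : HasDerivAt (fun y => (Real.log π - Real.log (Real.sin (π*y))) * Real.sin (2*π*n*y))
      ((0 - (Real.cos (π*x)*π)/Real.sin (π*x)) * Real.sin (2*π*n*x)
        + (Real.log π - Real.log (Real.sin (π*x))) * (Real.cos (2*π*n*x)*(2*π*n))) x := by
    have := ((hasDerivAt_const x (Real.log π)).fun_sub d2).fun_mul
      (by simpa [mul_assoc] using d3 (2*π*n))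
    simpa [mul_assoc] using this
  have dsum : HasDerivAt (fun y => ∑ k ∈ Finset.Ico 1 n, Real.sin (2*π*k*y)/(π*k))
      (∑ k ∈ Finset.Ico 1 n, (Real.cos (2*π*k*x)*(2*π*k))/(π*k)) x := by
    apply HasDerivAt.fun_sum
    intro k hk
    exact ((d3 (2*π*k))).div_const (π*k)
  have dP : HasDerivAt (fun y => y + Real.sin (2*π*n*y)/(2*π*n)
        + ∑ k ∈ Finset.Ico 1 n, Real.sin (2*π*k*y)/(π*k))
      (1 + (Real.cos (2*π*n*x)*(2*π*n))/(2*π*n)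
        + ∑ k ∈ Finset.Ico 1 n, (Real.cos (2*π*k*x)*(2*π*k))/(π*k)) x :=
    ((hasDerivAt_id x).add ((d3 (2*π*n)).div_const (2*π*n))).add dsum
  have dG := (d4.div_const (2*π*n)).fun_add (dP.const_mul ((1:ℝ)/(2*(n:ℝ))))
  refine dG.congr_deriv (Eq.symm ?_)
  have hsum : ∑ k ∈ Finset.Ico 1 n, (Real.cos (2*π*k*x)*(2*π*k))/(π*k)
      = 2 * ∑ k ∈ Finset.Ico 1 n, Real.cos (2*π*k*x) := by
    rw [Finset.mul_sum]
    refine Finset.sum_congr rfl fun k hk => ?_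
    have hk1 : (1:ℝ) ≤ k := by exact_mod_cast (Finset.mem_Ico.1 hk).1
    have : (k:ℝ) ≠ 0 := by linarith
    field_simp
  rw [hsum]
  have key := trig_id (π*x) n hn
  simp only [show ∀ k:ℕ, 2*(k:ℝ)*(π*x) = 2*π*(k:ℝ)*x from fun k => by ring] at key
  unfold gg
  field_simp
  ring_nf at key ⊢
  linear_combination (-π) * key


lemma intervalIntegrable_logGamma_cos (n : ℕ) :
    IntervalIntegrable (fun x => Real.log (Real.Gamma x) * Real.cos (2*π*n*x)) volume 0 1 := by
  have hcont : ContinuousOn (fun t => Real.log (Real.Gamma t)) (Set.Icc (1:ℝ) 2) := by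
    intro t ht
    apply ContinuousAt.continuousWithinAt
    have hd : DifferentiableAt ℝ Real.Gamma t := Real.differentiableAt_Gamma (fun m =>
      ne_of_gt (lt_of_le_of_lt (neg_nonpos.mpr (Nat.cast_nonneg m)) (by linarith [ht.1])))
    exact hd.continuousAt.log (Real.Gamma_pos_of_pos (by linarith [ht.1])).ne'
  obtain ⟨K, hK⟩ := isCompact_Icc.exists_bound_of_continuousOn hcont
  refine IntervalIntegrable.mono_fun' (g := fun x => K + 2*x^(-(1/2):ℝ)) ?_ ?_ ?_
  · exact intervalIntegrable_const.add
      ((intervalIntegral.intervalIntegrable_rpow' (by norm_num)).const_mul 2)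
  · rw [Set.uIoc_of_le (zero_le_one (α := ℝ))]
    refine ContinuousOn.aestronglyMeasurable ?_ measurableSet_Ioc
    intro x hx
    apply ContinuousAt.continuousWithinAt
    have hd : DifferentiableAt ℝ Real.Gamma x := Real.differentiableAt_Gamma (fun m =>
      ne_of_gt (lt_of_le_of_lt (neg_nonpos.mpr (Nat.cast_nonneg m)) hx.1))
    exact (hd.continuousAt.log (Real.Gamma_pos_of_pos hx.1).ne').mul
      (Real.continuous_cos.comp (continuous_const.mul continuous_id)).continuousAt
  · rw [Set.uIoc_of_le (zero_le_one (α := ℝ))]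
    refine (ae_restrict_iff' measurableSet_Ioc).mpr (Filter.Eventually.of_forall fun x hx => ?_)
    have hx0 : 0 < x := hx.1
    have hx1 : x ≤ 1 := hx.2
    have him : Real.log (Real.Gamma x) = Real.log (Real.Gamma (x+1)) - Real.log x := by
      rw [Real.Gamma_add_one hx0.ne', Real.log_mul hx0.ne' (Real.Gamma_pos_of_pos hx0).ne']
      ring
    have hKx : ‖Real.log (Real.Gamma (x+1))‖ ≤ K := hK _ ⟨by linarith, by linarith⟩
    rw [norm_eq_abs] at hKx
    have hlx : |Real.log x| = -Real.log x := abs_of_nonpos (Real.log_nonpos hx0.le hx1)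
    have hrp : (0:ℝ) < x^(-(1/2):ℝ) := Real.rpow_pos_of_pos hx0 _
    have hlog2 : -Real.log x ≤ 2*x^(-(1/2):ℝ) := by
      have h1 := Real.log_le_sub_one_of_pos hrp
      rw [Real.log_rpow hx0] at h1
      linarith
    calc ‖Real.log (Real.Gamma x) * Real.cos (2*π*n*x)‖
        ≤ ‖Real.log (Real.Gamma x)‖ := by
          rw [norm_mul]
          exact mul_le_of_le_one_right (norm_nonneg _)
            (by rw [norm_eq_abs]; exact Real.abs_cos_le_one _)
    _ ≤ K + 2*x^(-(1/2):ℝ) := by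
          rw [him, norm_eq_abs, sub_eq_add_neg]
          calc |Real.log (Real.Gamma (x+1)) + -Real.log x|
              ≤ |Real.log (Real.Gamma (x+1))| + |(-Real.log x)| := abs_add_le _ _
          _ ≤ K + 2*x^(-(1/2):ℝ) := by
              rw [abs_neg, hlx]
              linarith


/-- The cosine Fourier coefficients of `log Γ` on `(0,1)`:
`2·∫_0^1 log Γ(x)·cos(2πnx) dx = 1/(2n)` for every positive integer `n`. -/
theorem logGamma_cos_fourier_coeff (n : ℕ) (hn : 0 < n) :
    2 * ∫ x in (0:ℝ)..1, Real.log (Real.Gamma x) * Real.cos (2 * π * n * x)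
      = 1 / (2 * n) := by
  have hn1 : 1 ≤ n := hn
  set f : ℝ → ℝ := fun x => Real.log (Real.Gamma x) * Real.cos (2 * π * n * x) with hf
  have h1 : IntervalIntegrable f volume 0 1 := intervalIntegrable_logGamma_cos n
  have hrefl_eq : ∀ x : ℝ, f (1 - x) = Real.log (Real.Gamma (1-x)) * Real.cos (2*π*n*x) := by
    intro x
    rw [hf]
    simp only
    rw [show 2*π*(n:ℝ)*(1-x) = (n:ℝ)*(2*π) - 2*π*(n:ℝ)*x by ring, Real.cos_nat_mul_two_pi_sub]
  set fr : ℝ → ℝ := fun x => Real.log (Real.Gamma (1-x)) * Real.cos (2*π*n*x) with hfr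
  have h2 : IntervalIntegrable fr volume 0 1 := by
    have h := h1.comp_sub_left 1
    rw [sub_self, sub_zero] at h
    have heq : (fun x => f (1-x)) = fr := funext hrefl_eq
    rw [heq] at h; exact h.symm
  have hswap : ∫ x in (0:ℝ)..1, f x = ∫ x in (0:ℝ)..1, fr x := by
    have h := intervalIntegral.integral_comp_sub_left (a := (0:ℝ)) (b := 1) f 1
    rw [sub_self, sub_zero] at h
    rw [← h]
    exact intervalIntegral.integral_congr (fun x _ => hrefl_eq x)
  have hae : ∀ᵐ x ∂(volume : Measure ℝ), x ∈ Set.uIoc (0:ℝ) 1 → f x + fr x = gg n x := by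
    have hone : ∀ᵐ (x:ℝ) ∂(volume : Measure ℝ), x ≠ 1 := by
      filter_upwards [compl_mem_ae_iff.mpr (measure_singleton (1:ℝ))] with x hx
      simpa using hx
    filter_upwards [hone] with x hxne hxI
    rw [Set.uIoc_of_le (zero_le_one (α := ℝ))] at hxI
    have hx0 : 0 < x := hxI.1
    have hxlt : x < 1 := lt_of_le_of_ne hxI.2 hxne
    have hg1 : 0 < Real.Gamma x := Real.Gamma_pos_of_pos hx0
    have hg2 : 0 < Real.Gamma (1-x) := Real.Gamma_pos_of_pos (by linarith)
    have hπ := Real.pi_pos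
    have hs : 0 < Real.sin (π*x) :=
      Real.sin_pos_of_pos_of_lt_pi (by positivity) (by nlinarith)
    rw [hf, hfr]
    simp only
    rw [← add_mul]
    unfold gg
    congr 1
    rw [← Real.log_mul hg1.ne' hg2.ne', Real.Gamma_mul_Gamma_one_sub,
        Real.log_div hπ.ne' hs.ne']
  have hgg_int : IntervalIntegrable (gg n) volume 0 1 := by
    have hsum := h1.add h2
    rw [intervalIntegrable_iff] at hsum ⊢
    exact hsum.congr ((ae_restrict_iff' measurableSet_uIoc).mpr hae)
  have hval : ∫ x in (0:ℝ)..1, gg n x = 1/(2*(n:ℝ)) :=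
    integral_gg n hn1 (fun x hx => hasDerivAt_Gg n hn1 hx) hgg_int
  have hcongr : ∫ x in (0:ℝ)..1, (f x + fr x) = ∫ x in (0:ℝ)..1, gg n x :=
    intervalIntegral.integral_congr_ae hae
  have hfinal : 2 * ∫ x in (0:ℝ)..1, f x = 1/(2*(n:ℝ)) := by
    rw [two_mul]
    nth_rewrite 2 [hswap]
    rw [← intervalIntegral.integral_add h1 h2, hcongr, hval]
  exact hfinal
end

section
/- For every real number x that is not an integer, log Γ(⟨x⟩) + log Γ(⟨1 − x⟩) = log(2π) + ∑_{n=1}^∞ cos(2π n x)/n, where ⟨t⟩ denotes the fractional part of t and the series on the right converges. -/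
open Real Filter Finset

theorem aux_tendsto (z : ℂ) (hz : ‖z‖ = 1) (hz1 : z ≠ 1) :
    Tendsto (fun N : ℕ => ∑ i ∈ range N, z ^ i / i) atTop
      (nhds (-Complex.log (1 - z))) := by
  set F : ℕ → ℂ := fun n => z ^ n / n with hF
  have h1z : (1 : ℂ) - z ≠ 0 := sub_ne_zero.mpr (Ne.symm hz1)
  have hpos : (0:ℝ) < ‖(1:ℂ) - z‖ := norm_pos_iff.mpr h1z
  -- Step 1: Cauchy via Dirichlet's test
  have hb : ∀ n : ℕ, ‖∑ i ∈ range n, z ^ (i + 1)‖ ≤ 2 / ‖(1:ℂ) - z‖ := by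
    intro n
    have he : ∑ i ∈ range n, z ^ (i + 1) = z * ((z ^ n - 1) / (z - 1)) := by
      rw [← geom_sum_eq hz1, Finset.mul_sum]
      exact Finset.sum_congr rfl fun i _ => by ring
    rw [he, norm_mul, norm_div, show ‖z‖ = 1 from hz, one_mul, norm_sub_rev]
    have hzn : ‖z ^ n - 1‖ ≤ 2 := by
      calc ‖z ^ n - 1‖ ≤ ‖z ^ n‖ + ‖(1:ℂ)‖ := norm_sub_le _ _
        _ ≤ 2 := by rw [norm_pow, show ‖z‖ = 1 from hz]; norm_num
    gcongr ?_ / ?_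
    · rwa [norm_sub_rev]
    · rw [norm_sub_rev]
  have hanti : Antitone (fun i : ℕ => ((i:ℝ) + 1)⁻¹) := by
    intro a b hab
    have ha : (0:ℝ) < a + 1 := by positivity
    have hab' : (a:ℝ) + 1 ≤ (b:ℝ) + 1 := by exact_mod_cast Nat.succ_le_succ hab
    exact inv_anti₀ ha hab'
  have h0 : Tendsto (fun i : ℕ => ((i:ℝ) + 1)⁻¹) atTop (nhds 0) := by
    exact tendsto_one_div_add_atTop_nhds_zero_nat.congr (fun n => by rw [one_div])
  have hcs := hanti.cauchySeq_series_mul_of_tendsto_zero_of_bounded h0 hb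
  have hsum_eq : ∀ n : ℕ, ∑ i ∈ range n, ((i:ℝ) + 1)⁻¹ • z ^ (i + 1)
      = ∑ i ∈ range (n + 1), F i := by
    intro n
    rw [Finset.sum_range_succ' (fun i => F i) n]
    have hF0 : F 0 = 0 := by simp [hF]
    rw [hF0, add_zero]
    refine Finset.sum_congr rfl fun i _ => ?_
    simp only [hF, Complex.real_smul, Complex.ofReal_inv]
    push_cast
    field_simp
  have hcs2 : CauchySeq (fun n => ∑ i ∈ range n, F i) := by
    rw [← cauchySeq_shift 1]
    simpa only [hsum_eq] using hcs
  obtain ⟨L, hL⟩ := cauchySeq_tendsto_of_complete hcs2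
  -- identify the limit via Abel's theorem
  have hre : (0:ℝ) < ((1:ℂ) - z).re := by
    simp only [Complex.sub_re, Complex.one_re]
    have h1 : z.re ≤ 1 := by
      have := Complex.abs_re_le_norm z
      rw [hz] at this
      cases' abs_le.mp this with h h'; exact h'
    rcases lt_or_eq_of_le h1 with h | h
    · linarith
    · exfalso; apply hz1
      have hsq : z.re ^ 2 + z.im ^ 2 = 1 := by
        have h2 := Complex.sq_norm z
        rw [hz] at h2
        rw [show (1:ℝ) = Complex.normSq z from by rw [← h2]; norm_num, Complex.normSq_apply]; ring
      have him : z.im = 0 := by nlinarith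
      exact Complex.ext (by simpa using h) (by simpa using him)
  have hslit : (1:ℂ) - z ∈ Complex.slitPlane := Or.inl hre
  have hcont : Tendsto (fun w : ℂ => -Complex.log (1 - w * z))
      ((nhdsWithin (1:ℝ) (Set.Iio 1)).map Complex.ofReal) (nhds (-Complex.log (1 - z))) := by
    have hc : ContinuousAt (fun w : ℂ => -Complex.log (1 - w * z)) 1 := by
      apply ContinuousAt.neg
      refine ContinuousAt.clog (continuousAt_const.sub (continuousAt_id.mul continuousAt_const)) ?_
      simpa using hslit
    have hfle : (nhdsWithin (1:ℝ) (Set.Iio 1)).map Complex.ofReal ≤ nhds (1:ℂ) := by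
      calc (nhdsWithin (1:ℝ) (Set.Iio 1)).map Complex.ofReal
          ≤ (nhds (1:ℝ)).map Complex.ofReal := map_mono nhdsWithin_le_nhds
        _ ≤ nhds (1:ℂ) := by
            exact (by simpa using (Complex.continuous_ofReal.tendsto 1) : Tendsto Complex.ofReal (nhds (1:ℝ)) (nhds (1:ℂ)))
    have := hc.tendsto.mono_left hfle
    simpa using this
  have hev : ∀ᶠ w in (nhdsWithin (1:ℝ) (Set.Iio 1)).map Complex.ofReal,
      (∑' n, F n * w ^ n) = -Complex.log (1 - w * z) := by
    rw [Filter.eventually_map]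
    filter_upwards [Ioo_mem_nhdsLT_of_mem (show (1:ℝ) ∈ Set.Ioc (-1:ℝ) 1 from ⟨by norm_num, le_refl _⟩)]
      with r hr
    have hrz : ‖(r:ℂ) * z‖ < 1 := by
      rw [norm_mul, Complex.norm_real, show ‖z‖ = 1 from hz, mul_one, Real.norm_eq_abs, abs_lt]
      exact ⟨by linarith [hr.1], hr.2⟩
    have hs := Complex.hasSum_taylorSeries_neg_log hrz
    rw [← hs.tsum_eq]
    exact tsum_congr fun n => by rw [hF]; simp only; rw [mul_pow]; ring
  have habel := (Complex.tendsto_tsum_powerSeries_nhdsWithin_lt hL).congr' hev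
  have hLeq : L = -Complex.log (1 - z) := tendsto_nhds_unique habel hcont
  rw [← hLeq]
  exact hL

/-- For non-integer real `x`,
`log Γ(⟨x⟩) + log Γ(⟨1−x⟩) = log(2π) + ∑_{n≥1} cos(2πnx)/n`, the series converging
(in the sense of its partial sums); here `⟨t⟩` is the fractional part of `t`. -/
theorem logGamma_reflection_fourier (x : ℝ) (hx : ∀ m : ℤ, x ≠ (m : ℝ)) :
    ∃ S : ℝ,
      Tendsto (fun N : ℕ => ∑ n ∈ Finset.Icc 1 N, Real.cos (2 * π * n * x) / n)
        atTop (nhds S) ∧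
      Real.log (Real.Gamma (Int.fract x)) + Real.log (Real.Gamma (Int.fract (1 - x)))
        = Real.log (2 * π) + S := by
  set t := Int.fract x with ht
  have ht0 : 0 < t := by
    rcases lt_or_eq_of_le (Int.fract_nonneg x) with h | h
    · exact h
    · exfalso
      have h' : t = 0 := h.symm
      have h2 : x - (⌊x⌋ : ℝ) = t := Int.self_sub_floor x
      exact hx ⌊x⌋ (by linarith)
  have ht1 : t < 1 := Int.fract_lt_one x
  have hfract1x : Int.fract (1 - x) = 1 - t := by
    have h1 : (1:ℝ) - x = -x + (1:ℤ) := by push_cast; ring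
    rw [h1, Int.fract_add_intCast, Int.fract_neg (ne_of_gt ht0)]
  have hsin : 0 < Real.sin (π * t) := by
    apply Real.sin_pos_of_pos_of_lt_pi (by positivity)
    nlinarith [Real.pi_pos]
  set z : ℂ := Complex.exp (((2 * π * t : ℝ) : ℂ) * Complex.I) with hzdef
  have hzabs : ‖z‖ = 1 := Complex.norm_exp_ofReal_mul_I _
  have hz1 : z ≠ 1 := by
    intro h
    rw [hzdef, Complex.exp_eq_one_iff] at h
    obtain ⟨n, hn⟩ := h
    have him : 2 * π * t = (n : ℝ) * (2 * π) := by
      have h' := congrArg Complex.im hn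
      simp [Complex.mul_im, Complex.ofReal_im, Complex.I_im, Complex.I_re] at h'
      linarith
    have htn : t = (n : ℝ) := by
      have h2π : (2 * π : ℝ) ≠ 0 := by positivity
      refine mul_right_cancel₀ h2π ?_
      linarith
    have h0n : (0:ℝ) < n := htn ▸ ht0
    have h1n : (n:ℝ) < 1 := htn ▸ ht1
    have : (0:ℤ) < n := by exact_mod_cast h0n
    have : n < (1:ℤ) := by exact_mod_cast h1n
    omega
  -- |1 - z| = 2 sin (π t)
  set a : ℂ := ((π * t : ℝ) : ℂ) * Complex.I with hadef
  have hz2a : z = Complex.exp (2 * a) := by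
    rw [hzdef, hadef]; congr 1; push_cast; ring
  have hfactor : (1 : ℂ) - z = Complex.exp a * (Complex.exp (-a) - Complex.exp a) := by
    rw [hz2a, mul_sub, ← Complex.exp_add, ← Complex.exp_add]
    rw [show a + -a = 0 by ring, Complex.exp_zero, show a + a = 2 * a by ring]
  have hsin' : Complex.exp (-a) - Complex.exp a
      = Complex.sin (((π * t : ℝ) : ℂ)) * 2 / Complex.I := by
    rw [Complex.sin, hadef]
    field_simp [Complex.I_ne_zero]
  have habs : ‖1 - z‖ = 2 * Real.sin (π * t) := by
    rw [hfactor, norm_mul, Complex.norm_exp_ofReal_mul_I, one_mul, hsin', norm_div, norm_mul,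
      Complex.norm_I, div_one, ← Complex.ofReal_sin, Complex.norm_real, Real.norm_eq_abs, Complex.norm_two,
      abs_of_pos hsin]
    ring
  -- the limit
  have hmain := aux_tendsto z hzabs hz1
  have hre := (Complex.continuous_re.tendsto _).comp hmain
  set S : ℝ := (-Complex.log (1 - z)).re with hSdef
  have hSval : S = -Real.log (2 * Real.sin (π * t)) := by
    rw [hSdef, Complex.neg_re, Complex.log_re, habs]
  refine ⟨S, ?_, ?_⟩
  · -- convergence of the cosine series
    have hterm : ∀ i : ℕ, (z ^ i / (i : ℂ)).re = Real.cos (2 * π * i * x) / i := by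
      intro i
      have hzi : z ^ i = Complex.exp (((2 * π * i * t : ℝ) : ℂ) * Complex.I) := by
        rw [hzdef, ← Complex.exp_nat_mul]
        congr 1
        push_cast
        ring
      rw [hzi, show ((i : ℕ) : ℂ) = ((i : ℝ) : ℂ) from by push_cast; rfl,
        Complex.div_ofReal_re, Complex.exp_ofReal_mul_I_re]
      congr 1
      have hxt : 2 * π * i * x = 2 * π * i * t + ((i * ⌊x⌋ : ℤ) : ℝ) * (2 * π) := by
        have := Int.self_sub_floor x
        rw [← ht] at this
        push_cast
        linear_combination (2 * π * (i:ℝ)) * this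
      rw [hxt, Real.cos_add_int_mul_two_pi]
    have hre' : Tendsto (fun N : ℕ => ∑ i ∈ range N, Real.cos (2 * π * i * x) / i)
        atTop (nhds S) := by
      refine hre.congr fun N => ?_
      simp only [Function.comp]
      rw [Complex.re_sum]
      exact Finset.sum_congr rfl fun i _ => hterm i
    have hIcc : ∀ N : ℕ, ∑ n ∈ Finset.Icc 1 N, Real.cos (2 * π * n * x) / n
        = ∑ n ∈ range (N + 1), Real.cos (2 * π * n * x) / n := by
      intro N
      rw [Finset.range_eq_Ico, Finset.sum_eq_sum_Ico_succ_bot (Nat.succ_pos N)]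
      rw [Nat.cast_zero, div_zero, zero_add, Nat.succ_eq_add_one, zero_add, Finset.Ico_add_one_right_eq_Icc]
    rw [show (fun N : ℕ => ∑ n ∈ Finset.Icc 1 N, Real.cos (2 * π * n * x) / n)
        = fun N : ℕ => ∑ n ∈ range (N + 1), Real.cos (2 * π * n * x) / n
        from funext hIcc]
    exact hre'.comp (tendsto_add_atTop_nat 1)
  · -- the reflection formula
    have hG1 : 0 < Real.Gamma t := Real.Gamma_pos_of_pos ht0
    have hG2 : 0 < Real.Gamma (1 - t) := Real.Gamma_pos_of_pos (by linarith)
    rw [hfract1x, ← Real.log_mul (ne_of_gt hG1) (ne_of_gt hG2),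
      Real.Gamma_mul_Gamma_one_sub, hSval,
      Real.log_div (ne_of_gt Real.pi_pos) (ne_of_gt hsin),
      Real.log_mul two_ne_zero (ne_of_gt Real.pi_pos),
      Real.log_mul two_ne_zero (ne_of_gt hsin)]
    ring
end

section
/- For every positive integer k and every real number x such that kx is not an integer, one has ∑_{ℓ=0}^{k−1} log Γ(⟨x + ℓ/k⟩) = ((k−1)/2)·log(2π) − (log k)·(⟨k x⟩ − 1/2) + log Γ(⟨k x⟩). -/
open Real Finset


lemma abs_one_sub_exp (θ : ℝ) : ‖1 - Complex.exp (θ * Complex.I)‖ = 2 * |Real.sin (θ/2)| := by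
  rw [Complex.exp_mul_I]
  have h : (1 : ℂ) - (Complex.cos θ + Complex.sin θ * Complex.I)
      = Complex.ofReal (1 - Real.cos θ) + Complex.ofReal (-Real.sin θ) * Complex.I := by
    push_cast [Complex.ofReal_cos, Complex.ofReal_sin]; ring
  rw [h, Complex.norm_add_mul_I]
  have hs : |Real.sin (θ/2)|^2 = (1 - Real.cos θ)/2 := by
    rw [Real.abs_sin_half, sq_sqrt]
    have := Real.cos_le_one θ; linarith
  have h2 : (1 - Real.cos θ)^2 + (-Real.sin θ)^2 = (2 * |Real.sin (θ/2)|)^2 := by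
    have hp := Real.sin_sq_add_cos_sq θ
    nlinarith
  rw [h2, Real.sqrt_sq (by positivity)]

lemma prod_two_sin (k : ℕ) (hk : 0 < k) :
    ∏ j ∈ Finset.range (k-1), (2 * Real.sin (π * (j+1) / k)) = k := by
  obtain ⟨n, rfl⟩ : ∃ n, k = n + 1 := ⟨k-1, (Nat.succ_pred_eq_of_pos hk).symm⟩
  simp only [Nat.add_sub_cancel]
  have hμ := Complex.isPrimitiveRoot_exp (n+1) (Nat.succ_ne_zero n)
  have h := hμ.prod_one_sub_pow_eq_order
  apply_fun (‖·‖) at h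
  rw [Complex.norm_prod] at h
  have habs : ‖((n : ℂ) + 1)‖ = (n : ℝ) + 1 := by
    rw [show ((n : ℂ) + 1) = ((n + 1 : ℝ) : ℂ) by push_cast; ring, Complex.norm_real, Real.norm_eq_abs,
      abs_of_pos (by positivity)]
  rw [habs] at h
  have hne : ((n:ℂ)+1) ≠ 0 := by
    have : (0:ℝ) < (n:ℝ) + 1 := by positivity
    exact_mod_cast (show ((n:ℂ)+1) = (((n:ℝ)+1 : ℝ) : ℂ) by push_cast; ring) ▸
      Complex.ofReal_ne_zero.mpr this.ne'
  have key : ∀ j ∈ Finset.range n,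
      ‖(1 - Complex.exp (2 * π * Complex.I / ((n:ℕ)+1 : ℕ)) ^ (j+1))‖
        = 2 * Real.sin (π * (j+1) / ((n:ℝ)+1)) := by
    intro j hj
    rw [Finset.mem_range] at hj
    rw [← Complex.exp_nat_mul]
    have harg : ((j:ℕ)+1 : ℕ) * (2 * (π:ℂ) * Complex.I / (((n:ℕ)+1 : ℕ) : ℂ))
        = ((2 * π * (j+1) / (n+1) : ℝ) : ℂ) * Complex.I := by
      push_cast
      field_simp
    rw [harg, abs_one_sub_exp]
    have harg2 : (2 * π * ((j:ℝ)+1) / ((n:ℝ)+1)) / 2 = π * (j+1) / (n+1) := by ring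
    rw [harg2, abs_of_pos]
    apply Real.sin_pos_of_pos_of_lt_pi
    · have h0 : (0:ℝ) < (n:ℝ)+1 := by positivity
      positivity
    · have h1 : ((j:ℝ)+1) < (n:ℝ)+1 := by exact_mod_cast Nat.succ_lt_succ hj
      rw [div_lt_iff₀ (by positivity)]
      nlinarith [Real.pi_pos]
  rw [Finset.prod_congr rfl key] at h
  push_cast
  exact h

lemma two_mul_log_prod_Gamma (k : ℕ) (hk : 0 < k) :
    2 * Real.log (∏ j ∈ Finset.range (k-1), Real.Gamma (((j:ℝ)+1)/k))
      = ((k:ℝ)-1) * Real.log (2*π) - Real.log k := by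
  set P := ∏ j ∈ Finset.range (k-1), Real.Gamma (((j:ℝ)+1)/k) with hPdef
  have hkR : (0:ℝ) < k := by exact_mod_cast hk
  have hP : 0 < P := by
    apply Finset.prod_pos
    intro j _
    exact Real.Gamma_pos_of_pos (by positivity)
  have hrefl : ∏ j ∈ Finset.range (k-1), Real.Gamma (1 - ((j:ℝ)+1)/k) = P := by
    rw [hPdef, ← Finset.prod_range_reflect (fun j => Real.Gamma (((j:ℝ)+1)/k)) (k-1)]
    apply Finset.prod_congr rfl
    intro j hj
    rw [Finset.mem_range] at hj
    congr 1
    have h2 : j + 2 ≤ k := by omega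
    have : (k - 1 - 1 - j : ℕ) = k - (j+2) := by omega
    rw [this, Nat.cast_sub h2]
    push_cast
    field_simp
    ring
  have hsq : P^2 = (2*π)^(k-1) / k := by
    have : P^2 = ∏ j ∈ Finset.range (k-1),
        (Real.Gamma (((j:ℝ)+1)/k) * Real.Gamma (1 - ((j:ℝ)+1)/k)) := by
      rw [Finset.prod_mul_distrib, hrefl, hPdef, sq]
    rw [this]
    have hstep : ∀ j ∈ Finset.range (k-1),
        Real.Gamma (((j:ℝ)+1)/k) * Real.Gamma (1 - ((j:ℝ)+1)/k)
          = (2*π) / (2 * Real.sin (π * ((j:ℝ)+1) / k)) := by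
      intro j _
      rw [Real.Gamma_mul_Gamma_one_sub, mul_div_mul_left _ _ (two_ne_zero)]
      congr 2
      ring
    rw [Finset.prod_congr rfl hstep, Finset.prod_div_distrib, Finset.prod_const,
      Finset.card_range, prod_two_sin k hk]
  have h2π : (0:ℝ) < 2*π := by positivity
  have : 2 * Real.log P = Real.log (P^2) := by
    rw [Real.log_pow]; push_cast; ring
  rw [this, hsq, Real.log_div (by positivity) hkR.ne', Real.log_pow,
    Nat.cast_pred hk]

lemma convexOn_log_Gamma_comp (a b : ℝ) (ha : 0 < a) (hb : 0 ≤ b) :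
    ConvexOn ℝ (Set.Ioi 0) (fun s => Real.log (Real.Gamma (a*s + b))) := by
  refine ⟨convex_Ioi 0, fun x hx y hy α β hα hβ hαβ => ?_⟩
  have h1 : a*x+b ∈ Set.Ioi (0:ℝ) := by
    simp only [Set.mem_Ioi] at hx ⊢; positivity
  have h2 : a*y+b ∈ Set.Ioi (0:ℝ) := by
    simp only [Set.mem_Ioi] at hy ⊢; positivity
  have key := Real.convexOn_log_Gamma.2 h1 h2 hα hβ hαβ
  simp only [Function.comp_apply, smul_eq_mul] at key ⊢
  have harg : a * (α * x + β * y) + b = α * (a*x+b) + β * (a*y+b) := by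
    linear_combination (-b) * hαβ
  rw [harg]
  exact key

lemma convexOn_finset_sum {ι : Type*} (t : Finset ι) (f : ι → ℝ → ℝ)
    (h : ∀ i ∈ t, ConvexOn ℝ (Set.Ioi 0) (f i)) :
    ConvexOn ℝ (Set.Ioi 0) (fun x => ∑ i ∈ t, f i x) := by
  classical
  induction t using Finset.induction with
  | empty => simpa using convexOn_const (0:ℝ) (convex_Ioi (0:ℝ))
  | @insert a t hni ih =>
    simp_rw [Finset.sum_insert hni]
    exact (h a (Finset.mem_insert_self a t)).add (ih fun i hi => h i (Finset.mem_insert_of_mem hi))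

noncomputable def multGamma (k : ℕ) (s : ℝ) : ℝ :=
  (∏ j ∈ Finset.range k, Real.Gamma ((s + j)/k)) * (k:ℝ)^(s-1)
    / (∏ j ∈ Finset.range (k-1), Real.Gamma (((j:ℝ)+1)/k))

lemma multGamma_pos (k : ℕ) (hk : 0 < k) {s : ℝ} (hs : 0 < s) : 0 < multGamma k s := by
  have hkR : (0:ℝ) < k := by exact_mod_cast hk
  apply div_pos
  · apply mul_pos
    · exact Finset.prod_pos fun j _ => Real.Gamma_pos_of_pos (by positivity)
    · exact Real.rpow_pos_of_pos hkR _
  · exact Finset.prod_pos fun j _ => Real.Gamma_pos_of_pos (by positivity)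

lemma multGamma_add_one (k : ℕ) (hk : 0 < k) {s : ℝ} (hs : 0 < s) :
    multGamma k (s+1) = s * multGamma k s := by
  have hkR : (0:ℝ) < k := by exact_mod_cast hk
  have hfe : ∏ j ∈ Finset.range k, Real.Gamma ((s + 1 + j)/k)
      = (∏ j ∈ Finset.range k, Real.Gamma ((s + j)/k)) * (s/k) := by
    have e1 := Finset.prod_range_succ' (fun j : ℕ => Real.Gamma ((s + j)/k)) k
    have e2 := Finset.prod_range_succ (fun j : ℕ => Real.Gamma ((s + j)/k)) k
    have hlast : Real.Gamma ((s + k)/k) = (s/k) * Real.Gamma (s/k) := by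
      have : (s + (k:ℝ))/k = s/k + 1 := by field_simp
      rw [this, Real.Gamma_add_one (by positivity)]
    have h0 : Real.Gamma ((s + (0:ℕ))/k) ≠ 0 := by
      push_cast
      exact (Real.Gamma_pos_of_pos (by positivity)).ne'
    have hre : ∏ j ∈ Finset.range k, Real.Gamma ((s + 1 + j)/k)
        = ∏ j ∈ Finset.range k, Real.Gamma ((s + ((j:ℕ)+1:ℕ))/k) := by
      apply Finset.prod_congr rfl
      intro j _
      push_cast
      ring_nf
    have hg0 : (s + ((0:ℕ):ℝ))/k = s/k := by norm_num
    rw [hg0] at e1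
    rw [hlast] at e2
    have key := e1.symm.trans e2
    have hG : Real.Gamma (s/k) ≠ 0 := (Real.Gamma_pos_of_pos (by positivity)).ne'
    rw [hre]
    apply mul_right_cancel₀ hG
    rw [key]
    ring
  rw [multGamma, multGamma, hfe, show s + 1 - 1 = s - 1 + 1 by ring,
    Real.rpow_add hkR, Real.rpow_one]
  field_simp

lemma multGamma_one (k : ℕ) (hk : 0 < k) : multGamma k 1 = 1 := by
  have hkR : (0:ℝ) < k := by exact_mod_cast hk
  have hP : (0:ℝ) < ∏ j ∈ Finset.range (k-1), Real.Gamma (((j:ℝ)+1)/k) :=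
    Finset.prod_pos fun j _ => Real.Gamma_pos_of_pos (by positivity)
  have hprod : ∏ j ∈ Finset.range k, Real.Gamma ((1 + (j:ℝ))/k)
      = ∏ j ∈ Finset.range (k-1), Real.Gamma (((j:ℝ)+1)/k) := by
    have hk1 : k - 1 + 1 = k := Nat.succ_pred_eq_of_pos hk
    have hstep := Finset.prod_range_succ (fun j : ℕ => Real.Gamma ((1 + (j:ℝ))/k)) (k-1)
    rw [hk1] at hstep
    have hlast : (1 + ((k-1:ℕ):ℝ))/k = 1 := by
      rw [Nat.cast_pred hk]
      field_simp
      ring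
    rw [hstep, hlast, Real.Gamma_one, mul_one]
    apply Finset.prod_congr rfl
    intro j _
    congr 2
    ring
  rw [multGamma, sub_self, Real.rpow_zero, mul_one, hprod, div_self hP.ne']

lemma multGamma_log_convex (k : ℕ) (hk : 0 < k) :
    ConvexOn ℝ (Set.Ioi (0:ℝ)) (Real.log ∘ multGamma k) := by
  have hkR : (0:ℝ) < k := by exact_mod_cast hk
  have hP : (0:ℝ) < ∏ j ∈ Finset.range (k-1), Real.Gamma (((j:ℝ)+1)/k) :=
    Finset.prod_pos fun j _ => Real.Gamma_pos_of_pos (by positivity)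
  have heq : Set.EqOn (Real.log ∘ multGamma k)
      (fun s => (∑ j ∈ Finset.range k, Real.log (Real.Gamma ((s + j)/k)) + s * Real.log k)
        + (-(Real.log k) - Real.log (∏ j ∈ Finset.range (k-1), Real.Gamma (((j:ℝ)+1)/k))))
      (Set.Ioi 0) := by
    intro s hs
    rw [Set.mem_Ioi] at hs
    have hne : ∀ j ∈ Finset.range k, Real.Gamma ((s + (j:ℝ))/k) ≠ 0 :=
      fun j _ => (Real.Gamma_pos_of_pos (by positivity)).ne'
    have hprodpos : (0:ℝ) < ∏ j ∈ Finset.range k, Real.Gamma ((s + (j:ℝ))/k) :=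
      Finset.prod_pos fun j _ => Real.Gamma_pos_of_pos (by positivity)
    simp only [Function.comp_apply, multGamma]
    rw [Real.log_div (by positivity) hP.ne', Real.log_mul hprodpos.ne'
      (Real.rpow_pos_of_pos hkR _).ne', Real.log_rpow hkR, Real.log_prod hne]
    ring
  refine ConvexOn.congr ?_ heq.symm
  apply ConvexOn.add_const
  apply ConvexOn.add
  · apply convexOn_finset_sum
    intro j _
    have : ∀ s : ℝ, (s + (j:ℝ))/k = (1/(k:ℝ)) * s + (j:ℝ)/k := by
      intro s; field_simp
    simp_rw [this]
    exact convexOn_log_Gamma_comp _ _ (by positivity) (by positivity)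
  · have h := (convexOn_id (convex_Ioi (0:ℝ))).smul (Real.log_nonneg (x := (k:ℝ)) (by exact_mod_cast hk))
    simp only [smul_eq_mul, mul_comm] at h
    exact h

lemma sum_log_Gamma_div (k : ℕ) (hk : 0 < k) {s : ℝ} (hs : 0 < s) :
    ∑ j ∈ Finset.range k, Real.log (Real.Gamma ((s + j)/k))
      = ((k:ℝ)-1)/2 * Real.log (2*π) - Real.log k * (s - 1/2)
        + Real.log (Real.Gamma s) := by
  have hkR : (0:ℝ) < k := by exact_mod_cast hk
  have hP : (0:ℝ) < ∏ j ∈ Finset.range (k-1), Real.Gamma (((j:ℝ)+1)/k) :=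
    Finset.prod_pos fun j _ => Real.Gamma_pos_of_pos (by positivity)
  have hprodpos : (0:ℝ) < ∏ j ∈ Finset.range k, Real.Gamma ((s + (j:ℝ))/k) :=
    Finset.prod_pos fun j _ => Real.Gamma_pos_of_pos (by positivity)
  have hG := Real.eq_Gamma_of_log_convex (multGamma_log_convex k hk)
    (fun {y} hy => multGamma_add_one k hk hy) (fun {y} hy => multGamma_pos k hk hy)
    (multGamma_one k hk) (Set.mem_Ioi.mpr hs)
  rw [multGamma, div_eq_iff hP.ne'] at hG
  have h2 := congrArg Real.log hG
  rw [Real.log_mul (by positivity) (Real.rpow_pos_of_pos hkR _).ne',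
    Real.log_rpow hkR,
    Real.log_mul (Real.Gamma_pos_of_pos hs).ne' hP.ne',
    Real.log_prod (s := Finset.range k) (f := fun j : ℕ => Real.Gamma ((s + (j:ℝ))/k))
      (fun j _ => (Real.Gamma_pos_of_pos (show (0:ℝ) < (s + (j:ℝ))/k by positivity)).ne')]
    at h2
  have h3 := two_mul_log_prod_Gamma k hk
  linear_combination h2 + (1/2) * h3

/-- Gauss multiplication for the periodized `log Γ`: for a positive integer `k` and real `x`
with `kx` not an integer,
`∑_{ℓ=0}^{k−1} log Γ(⟨x+ℓ/k⟩) = ((k−1)/2)·log(2π) − (log k)·(⟨kx⟩ − 1/2) + log Γ(⟨kx⟩)`,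
where `⟨t⟩` is the fractional part of `t`. -/
theorem logGamma_periodic_multiplication (k : ℕ) (hk : 0 < k) (x : ℝ)
    (hx : ∀ m : ℤ, (k : ℝ) * x ≠ (m : ℝ)) :
    ∑ ℓ ∈ Finset.range k, Real.log (Real.Gamma (Int.fract (x + ℓ / k)))
      = ((k : ℝ) - 1) / 2 * Real.log (2 * π)
        - Real.log k * (Int.fract ((k : ℝ) * x) - 1 / 2)
        + Real.log (Real.Gamma (Int.fract ((k : ℝ) * x))) := by
  have hkR : (0:ℝ) < k := by exact_mod_cast hk
  have hkZ : (0:ℤ) < k := by exact_mod_cast hk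
  set n := ⌊(k:ℝ) * x⌋ with hn
  set f := Int.fract ((k:ℝ) * x) with hf
  have hf0 : 0 < f := by
    rw [hf, Int.fract_pos]
    intro h
    exact hx n h
  have hf1 : f < 1 := Int.fract_lt_one _
  have hkx : (k:ℝ) * x = (n:ℝ) + f := (Int.floor_add_fract _).symm
  have hfrac : ∀ ℓ : ℕ, ℓ < k →
      Int.fract (x + ℓ/k) = ((((n + ℓ) % k).toNat : ℝ) + f)/k := by
    intro ℓ hℓ
    have hr0 : 0 ≤ (n + ℓ) % (k:ℤ) := Int.emod_nonneg _ hkZ.ne'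
    have hrk : (n + ℓ) % (k:ℤ) < k := Int.emod_lt_of_pos _ hkZ
    have hqr := Int.mul_ediv_add_emod (n + ℓ) k
    have hxeq : x + ℓ/k
        = (((n+ℓ)/(k:ℤ) : ℤ) : ℝ) + ((((n + ℓ) % k).toNat : ℝ) + f)/k := by
      have hx' : x = ((n:ℝ) + f)/k := by
        rw [eq_div_iff hkR.ne']
        linarith [hkx]
      rw [hx']
      have hcast : ((((n + ℓ) % k).toNat : ℕ) : ℝ) = (((n + ℓ) % (k:ℤ) : ℤ) : ℝ) := by
        exact_mod_cast Int.toNat_of_nonneg hr0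
      rw [hcast]
      have hqrR : (k:ℝ) * (((n+ℓ)/(k:ℤ) : ℤ) : ℝ) + (((n + ℓ) % (k:ℤ) : ℤ) : ℝ)
          = (n:ℝ) + ℓ := by exact_mod_cast hqr
      field_simp
      linarith [hqrR]
    rw [hxeq, Int.fract_intCast_add, Int.fract_eq_self.mpr ⟨?_, ?_⟩]
    · exact div_nonneg (add_nonneg (Nat.cast_nonneg _) hf0.le) hkR.le
    · rw [div_lt_one hkR]
      have h1 : ((n + ℓ) % (k:ℤ)).toNat + 1 ≤ k := by omega
      have h1R : ((((n + ℓ) % (k:ℤ)).toNat : ℝ)) + 1 ≤ k := by exact_mod_cast h1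
      linarith
  calc ∑ ℓ ∈ Finset.range k, Real.log (Real.Gamma (Int.fract (x + ℓ / k)))
      = ∑ ℓ ∈ Finset.range k,
          Real.log (Real.Gamma (((((n + ℓ) % k).toNat : ℝ) + f)/k)) := by
        exact Finset.sum_congr rfl fun ℓ hℓ => by
          rw [hfrac ℓ (Finset.mem_range.mp hℓ)]
    _ = ∑ j ∈ Finset.range k, Real.log (Real.Gamma ((f + (j:ℝ))/k)) := by
        refine Finset.sum_bij' (fun ℓ _ => ((n + ℓ) % (k:ℤ)).toNat)
          (fun m _ => (((m:ℤ) - n) % (k:ℤ)).toNat) ?_ ?_ ?_ ?_ ?_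
        · intro a ha
          have := Int.emod_lt_of_pos (n + a) hkZ
          have := Int.emod_nonneg (n + a) hkZ.ne'
          beta_reduce
          rw [Finset.mem_range]
          omega
        · intro a ha
          have h1 := Int.emod_lt_of_pos ((a:ℤ) - n) hkZ
          have h2 := Int.emod_nonneg ((a:ℤ) - n) hkZ.ne'
          beta_reduce
          rw [Finset.mem_range]
          omega
        · intro a ha
          rw [Finset.mem_range] at ha
          have hr0 : 0 ≤ (n + (a:ℤ)) % (k:ℤ) := Int.emod_nonneg _ hkZ.ne'
          have key : ((((n + (a:ℤ)) % k).toNat : ℤ) - n) % (k:ℤ) = (a:ℤ) % k := by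
            rw [Int.toNat_of_nonneg hr0, Int.sub_emod, Int.emod_emod_of_dvd _ dvd_rfl,
              ← Int.sub_emod, add_sub_cancel_left]
          have ha' : (a:ℤ) % (k:ℤ) = a := Int.emod_eq_of_lt (Int.natCast_nonneg a)
            (by exact_mod_cast ha)
          beta_reduce
          rw [key, ha', Int.toNat_natCast]
        · intro a ha
          rw [Finset.mem_range] at ha
          have hr0 : 0 ≤ ((a:ℤ) - n) % (k:ℤ) := Int.emod_nonneg _ hkZ.ne'
          have key : (n + (((((a:ℤ) - n) % (k:ℤ)).toNat : ℕ) : ℤ)) % (k:ℤ) = (a:ℤ) % k := by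
            rw [Int.toNat_of_nonneg hr0, Int.add_emod, Int.emod_emod_of_dvd _ dvd_rfl,
              ← Int.add_emod, add_sub_cancel]
          have ha' : (a:ℤ) % (k:ℤ) = a := Int.emod_eq_of_lt (Int.natCast_nonneg a)
            (by exact_mod_cast ha)
          beta_reduce
          rw [key, ha', Int.toNat_natCast]
        · intro a ha
          simp [add_comm f]
    _ = ((k : ℝ) - 1) / 2 * Real.log (2 * π)
        - Real.log k * (f - 1 / 2) + Real.log (Real.Gamma f) :=
        sum_log_Gamma_div k hk hf0
end
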